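/- arXiv:1911.12791 — 2 statements merged into one kernel-verified Lean document; each statement's English description precedes it below -/
import Mathlib

section
/- Let k be a field and let Δ be a simplicial complex with depth k[Δ] < dim k[Δ] − 1. Then Δ has no Cohen–Macaulay extender: for every d-dimensional (d = dim Δ) Cohen–Macaulay complex Γ containing Δ, the relative complex (Γ,Δ) is not relative Cohen–Macaulay. Equivalently, if there exist a face σ ∈ Δ and an index i with H̃_i(lk_Δ(σ); k) ≠ 0 and |σ| + i + 1 ≤ d − 1, then for any d-dimensional Cohen–Macaulay Γ ⊇ Δ, the relative homology H̃_{i+1}(lk_Γ(σ), lk_Δ(σ); k) is nonzero with |σ| + (i+1) < d. -/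
/-- A simplicial complex on vertex set `ℕ`: a finite collection of finite sets of
vertices (faces) closed under taking subsets. -/
def IsComplex (Δ : Finset (Finset ℕ)) : Prop :=
  ∀ σ ∈ Δ, ∀ τ ⊆ σ, τ ∈ Δ

/-- `P` has dimension `d`: it is nonempty and its largest face has cardinality `d + 1`. -/
def dimIs (P : Finset (Finset ℕ)) (d : ℤ) : Prop :=
  P.Nonempty ∧ ((P.sup Finset.card : ℕ) : ℤ) = d + 1

/-- The link of the face `σ` in `Δ`:  `{τ ∈ Δ : σ ∪ τ ∈ Δ, σ ∩ τ = ∅}`. -/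
def lkF (Δ : Finset (Finset ℕ)) (σ : Finset ℕ) : Finset (Finset ℕ) :=
  Δ.filter (fun τ => σ ∪ τ ∈ Δ ∧ σ ∩ τ = ∅)

/-- The space of simplicial `k`-chains of cardinality `c` supported on the set of faces
`Q`: the free `k`-vector space on the faces of `Q` of cardinality `c`.  (Taking `Q = Δ`,
with `∅ ∈ Δ`, gives the augmented chain complex computing reduced homology; taking
`Q = Γ \ Δ` gives the relative chain complex of the pair `(Γ, Δ)`.) -/
abbrev Chains (k : Type) [Field k] (Q : Finset (Finset ℕ)) (c : ℤ) : Type :=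
  {σ : Finset ℕ // σ ∈ Q ∧ (σ.card : ℤ) = c} → k

/-- The simplicial boundary operator from chains of cardinality `c + 1` to chains of
cardinality `c`, given on basis elements by `∂σ = ∑_{v ∈ σ} (-1)^{|{w ∈ σ : w < v}|} (σ∖v)`
(discarding any `σ∖v ∉ Q`); here expressed on coordinates. -/
def bdryFun (k : Type) [Field k] (Q : Finset (Finset ℕ)) (c : ℤ)
    (f : Chains k Q (c + 1)) : Chains k Q c := fun τ =>
  ∑ v ∈ (Q.sup id) \ τ.1,
    if h : insert v τ.1 ∈ Q ∧ ((insert v τ.1).card : ℤ) = c + 1 then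
      (-1 : k) ^ (τ.1.filter (· < v)).card * f ⟨insert v τ.1, h⟩
    else 0

/-- The boundary operator as a linear map. -/
def bdry (k : Type) [Field k] (Q : Finset (Finset ℕ)) (c : ℤ) :
    Chains k Q (c + 1) →ₗ[k] Chains k Q c where
  toFun := bdryFun k Q c
  map_add' f g := by
    funext τ
    simp only [bdryFun, Pi.add_apply]
    rw [← Finset.sum_add_distrib]
    refine Finset.sum_congr rfl fun v hv => ?_
    split
    · rw [mul_add]
    · rw [add_zero]
  map_smul' a f := by
    funext τ
    simp only [bdryFun, Pi.smul_apply, smul_eq_mul, RingHom.id_apply, Finset.mul_sum]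
    refine Finset.sum_congr rfl fun v hv => ?_
    split
    · ring
    · rw [mul_zero]

/-- The reduced simplicial homology in dimension `n` with coefficients in the field `k`
of the (relative) complex whose set of faces is `Q`:  cycles of cardinality `n + 1`
modulo boundaries.  For `Q = Δ` a complex (which contains the empty face `∅` whenever it
is nonempty) this is the reduced homology `H̃_n(Δ; k)`; for `Q = Γ \ Δ` it is the
relative homology `H̃_n(Γ, Δ; k)`. -/
abbrev redH (k : Type) [Field k] (Q : Finset (Finset ℕ)) (n : ℤ) : Type :=
  LinearMap.ker (bdry k Q n) ⧸
    (LinearMap.range (bdry k Q (n + 1))).comap (LinearMap.ker (bdry k Q n)).subtype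

/-- The `d`-dimensional complex `Γ` is Cohen–Macaulay over `k`: for every face
`σ ∈ Γ`, the reduced homology `H̃_i(lk_Γ(σ); k)` vanishes for all
`i ≠ d - dim σ - 1 = d - |σ|`. -/
def IsCM (k : Type) [Field k] (Γ : Finset (Finset ℕ)) (d : ℤ) : Prop :=
  ∀ σ ∈ Γ, ∀ i : ℤ, i ≠ d - (σ.card : ℤ) → Subsingleton (redH k (lkF Γ σ) i)

/-- The relative complex `(Γ, Δ)`, with `dim Γ = d`, is relative Cohen–Macaulay over
`k`: for every face `σ` of `Γ`, the relative homology
`H̃_i(lk_Γ(σ), lk_Δ(σ); k)` vanishes except possibly when `|σ| + i = d`. -/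
def RelCM (k : Type) [Field k] (Γ Δ : Finset (Finset ℕ)) (d : ℤ) : Prop :=
  ∀ σ ∈ Γ, ∀ i : ℤ, (σ.card : ℤ) + i ≠ d →
    Subsingleton (redH k (lkF Γ σ \ lkF Δ σ) i)

/-- `depth k[Δ] ≥ h`, via Hochster's formula (Reisner's criterion for depth):
`H̃_i(lk_Δ(σ); k) = 0` whenever `|σ| + i + 1 < h`. -/
def DepthGE (k : Type) [Field k] (Δ : Finset (Finset ℕ)) (h : ℤ) : Prop :=
  ∀ σ ∈ Δ, ∀ i : ℤ, (σ.card : ℤ) + i + 1 < h → Subsingleton (redH k (lkF Δ σ) i)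

section Aux

variable {k : Type} [Field k]

/-- A family of finsets closed under subsets. -/
def IsClosedFam (Q : Finset (Finset ℕ)) : Prop := ∀ σ ∈ Q, ∀ τ ⊆ σ, τ ∈ Q

/-- The summand of the boundary operator. -/
def bterm (k : Type) [Field k] (Q : Finset (Finset ℕ)) (c : ℤ) (f : Chains k Q (c + 1))
    (τ : Finset ℕ) (v : ℕ) : k :=
  if h : insert v τ ∈ Q ∧ ((insert v τ).card : ℤ) = c + 1 then
    (-1 : k) ^ (τ.filter (· < v)).card * f ⟨insert v τ, h⟩ else 0

lemma bterm_zero {Q : Finset (Finset ℕ)} {c : ℤ} (f : Chains k Q (c + 1)) (τ : Finset ℕ)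
    {v : ℕ} (hv : v ∉ Q.sup id) : bterm k Q c f τ v = 0 := by
  rw [bterm, dif_neg]
  rintro ⟨h1, -⟩
  exact hv (Finset.le_sup (f := id) h1 (Finset.mem_insert_self v τ))

lemma bdry_apply {Q : Finset (Finset ℕ)} {c : ℤ} (f : Chains k Q (c + 1))
    (τ : {σ : Finset ℕ // σ ∈ Q ∧ (σ.card : ℤ) = c}) {S : Finset ℕ} (hS : Q.sup id ⊆ S) :
    bdry k Q c f τ = ∑ v ∈ S \ τ.1, bterm k Q c f τ.1 v := by
  show bdryFun k Q c f τ = _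
  rw [bdryFun]
  refine Finset.sum_subset (Finset.sdiff_subset_sdiff hS le_rfl) fun v hv hv' => ?_
  exact bterm_zero f τ.1 fun hvS => hv' (Finset.mem_sdiff.mpr ⟨hvS, (Finset.mem_sdiff.mp hv).2⟩)

/-- The summand of the double boundary. -/
def dterm (k : Type) [Field k] (Q : Finset (Finset ℕ)) (c : ℤ) (f : Chains k Q (c + 1 + 1))
    (τ : Finset ℕ) (v w : ℕ) : k :=
  if h : (insert v τ ∈ Q ∧ ((insert v τ).card : ℤ) = c + 1) ∧
      (insert w (insert v τ) ∈ Q ∧ (((insert w (insert v τ)).card : ℤ) = c + 1 + 1)) then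
    (-1 : k) ^ (τ.filter (· < v)).card *
      ((-1 : k) ^ ((insert v τ).filter (· < w)).card * f ⟨insert w (insert v τ), h.2⟩)
  else 0

lemma dterm_self {Q : Finset (Finset ℕ)} {c : ℤ} (f : Chains k Q (c + 1 + 1))
    (τ : Finset ℕ) (v : ℕ) : dterm k Q c f τ v v = 0 := by
  rw [dterm, dif_neg]
  rintro ⟨⟨-, h1⟩, -, h2⟩
  rw [Finset.insert_idem] at h2
  omega

lemma bterm_bdry {Q : Finset (Finset ℕ)} {c : ℤ} (f : Chains k Q (c + 1 + 1))
    (τ : Finset ℕ) (v : ℕ) (hv : v ∉ τ) (hvS : v ∈ Q.sup id) :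
    bterm k Q c (bdry k Q (c + 1) f) τ v = ∑ w ∈ Q.sup id \ τ, dterm k Q c f τ v w := by
  rw [bterm]
  split_ifs with h
  · rw [bdry_apply (S := Q.sup id) f ⟨insert v τ, h⟩ le_rfl, Finset.mul_sum]
    have hsd : Q.sup id \ τ = insert v (Q.sup id \ insert v τ) := by
      ext x
      simp only [Finset.mem_sdiff, Finset.mem_insert]
      constructor
      · rintro ⟨hx1, hx2⟩
        by_cases hxv : x = v
        · exact Or.inl hxv
        · exact Or.inr ⟨hx1, by simp [hxv, hx2]⟩
      · rintro (rfl | ⟨hx1, hx2⟩)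
        · exact ⟨hvS, hv⟩
        · exact ⟨hx1, fun hx => hx2 (Or.inr hx)⟩
    rw [hsd, Finset.sum_insert (by simp)]
    have hvv : dterm k Q c f τ v v = 0 := dterm_self f τ v
    rw [hvv, zero_add]
    refine Finset.sum_congr rfl fun w hw => ?_
    rw [bterm, dterm]
    by_cases hw2 : insert w (insert v τ) ∈ Q ∧ (((insert w (insert v τ)).card : ℤ) = c + 1 + 1)
    · rw [dif_pos hw2, dif_pos ⟨h, hw2⟩]
    · rw [dif_neg hw2, dif_neg (fun hc => hw2 hc.2), mul_zero]
  · symm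
    refine Finset.sum_eq_zero fun w hw => ?_
    rw [dterm, dif_neg (fun hc => h hc.1)]

lemma dterm_add {Q : Finset (Finset ℕ)} (hQ : IsClosedFam Q) {c : ℤ}
    (f : Chains k Q (c + 1 + 1)) (τ : Finset ℕ) {v w : ℕ} (hv : v ∉ τ) (hw : w ∉ τ) :
    dterm k Q c f τ v w + dterm k Q c f τ w v = 0 := by
  -- symmetric statement; reduce to the case v < w
  have main : ∀ v w : ℕ, v ∉ τ → w ∉ τ → v < w →
      dterm k Q c f τ v w + dterm k Q c f τ w v = 0 := by
    clear hv hw v w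
    intro v w hv hw hvw
    have hcomm : insert w (insert v τ) = insert v (insert w τ) := Finset.insert_comm w v τ
    by_cases h : (insert v τ ∈ Q ∧ ((insert v τ).card : ℤ) = c + 1) ∧
        (insert w (insert v τ) ∈ Q ∧ (((insert w (insert v τ)).card : ℤ) = c + 1 + 1))
    · have hvw' : insert v (insert w τ) ∈ Q := hcomm ▸ h.2.1
      have hwτ : insert w τ ∈ Q := hQ _ hvw' _ (Finset.subset_insert _ _)
      have hτcard : (τ.card : ℤ) = c := by
        have := h.1.2
        rw [Finset.card_insert_of_notMem hv] at this
        push_cast at this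
        omega
      have hwcard : ((insert w τ).card : ℤ) = c + 1 := by
        rw [Finset.card_insert_of_notMem hw]
        push_cast
        omega
      have hvnotin : v ∉ insert w τ := by
        simp only [Finset.mem_insert]
        rintro (rfl | hvτ)
        · exact absurd hvw (lt_irrefl _)
        · exact hv hvτ
      have hvwcard : ((insert v (insert w τ)).card : ℤ) = c + 1 + 1 := by
        rw [← hcomm]; exact h.2.2
      have h' : (insert w τ ∈ Q ∧ ((insert w τ).card : ℤ) = c + 1) ∧
          (insert v (insert w τ) ∈ Q ∧ (((insert v (insert w τ)).card : ℤ) = c + 1 + 1)) :=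
        ⟨⟨hwτ, hwcard⟩, ⟨hvw', hvwcard⟩⟩
      rw [dterm, dterm, dif_pos h, dif_pos h']
      have hfeq : f ⟨insert w (insert v τ), h.2⟩ = f ⟨insert v (insert w τ), h'.2⟩ := by
        congr 1
        exact Subtype.ext hcomm
      rw [hfeq]
      -- sign computation
      have e1 : ((insert v τ).filter (· < w)).card = (τ.filter (· < w)).card + 1 := by
        rw [Finset.filter_insert, if_pos hvw,
          Finset.card_insert_of_notMem (fun hc => hv (Finset.mem_filter.mp hc).1)]
      have e2 : ((insert w τ).filter (· < v)).card = (τ.filter (· < v)).card := by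
        rw [Finset.filter_insert, if_neg (not_lt.mpr hvw.le)]
      rw [e1, e2, pow_succ]
      ring
    · have h' : ¬((insert w τ ∈ Q ∧ ((insert w τ).card : ℤ) = c + 1) ∧
          (insert v (insert w τ) ∈ Q ∧ (((insert v (insert w τ)).card : ℤ) = c + 1 + 1))) := by
        rintro ⟨⟨h1, h2⟩, h3, h4⟩
        refine h ⟨⟨hQ _ (hcomm ▸ h3) _ (Finset.subset_insert _ _), ?_⟩, hcomm ▸ h3, hcomm ▸ h4⟩
        have hτcard : (τ.card : ℤ) = c := by
          rw [Finset.card_insert_of_notMem hw] at h2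
          push_cast at h2
          omega
        rw [Finset.card_insert_of_notMem hv]
        push_cast
        omega
      rw [dterm, dterm, dif_neg (fun hc => h hc), dif_neg h', add_zero]
  rcases lt_trichotomy v w with hlt | rfl | hlt
  · exact main v w hv hw hlt
  · rw [dterm_self, add_zero]
  · rw [add_comm]; exact main w v hw hv hlt

lemma bdry_bdry {Q : Finset (Finset ℕ)} (hQ : IsClosedFam Q) (c : ℤ)
    (f : Chains k Q (c + 1 + 1)) : bdry k Q c (bdry k Q (c + 1) f) = 0 := by
  funext τ
  rw [bdry_apply _ τ (le_refl (Q.sup id))]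
  have : ∑ v ∈ Q.sup id \ τ.1, bterm k Q c (bdry k Q (c + 1) f) τ.1 v =
      ∑ v ∈ Q.sup id \ τ.1, ∑ w ∈ Q.sup id \ τ.1, dterm k Q c f τ.1 v w := by
    exact Finset.sum_congr rfl fun v hv =>
      bterm_bdry f τ.1 v (Finset.mem_sdiff.mp hv).2 (Finset.mem_sdiff.mp hv).1
  rw [this, ← Finset.sum_product']
  show ∑ p ∈ (Q.sup id \ τ.1) ×ˢ (Q.sup id \ τ.1), dterm k Q c f τ.1 p.1 p.2 = (0 : Chains k Q c) τ
  have h0 : ∑ p ∈ (Q.sup id \ τ.1) ×ˢ (Q.sup id \ τ.1), dterm k Q c f τ.1 p.1 p.2 = 0 := by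
    refine Finset.sum_involution (fun p _ => (p.2, p.1))
      (fun p hp => dterm_add hQ f τ.1
        (Finset.mem_sdiff.mp (Finset.mem_product.mp hp).1).2
        (Finset.mem_sdiff.mp (Finset.mem_product.mp hp).2).2)
      (fun p hp hne hc => hne ?_) (fun p hp => Finset.mem_product.mpr
        ⟨(Finset.mem_product.mp hp).2, (Finset.mem_product.mp hp).1⟩) (fun p hp => rfl)
    have h2 : p.2 = p.1 := congrArg Prod.fst hc
    rw [h2]
    exact dterm_self f τ.1 p.1
  exact h0

end Aux

section Chase

variable {k : Type} [Field k]

/-- Extension by zero from chains on `A` to chains on `B ⊇ A`. -/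
def extF (k : Type) [Field k] (A B : Finset (Finset ℕ)) (c : ℤ) (f : Chains k A c) :
    Chains k B c :=
  fun τ => if h : τ.1 ∈ A then f ⟨τ.1, h, τ.2.2⟩ else 0

/-- Restriction of chains on `B` to chains on `B \ A`. -/
def resF (k : Type) [Field k] (A B : Finset (Finset ℕ)) (c : ℤ) (f : Chains k B c) :
    Chains k (B \ A) c :=
  fun τ => f ⟨τ.1, (Finset.mem_sdiff.mp τ.2.1).1, τ.2.2⟩

/-- Extension by zero from chains on `B \ A` to chains on `B`. -/
def extQF (k : Type) [Field k] (A B : Finset (Finset ℕ)) (c : ℤ) (f : Chains k (B \ A) c) :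
    Chains k B c :=
  fun τ => if h : τ.1 ∈ B \ A then f ⟨τ.1, h, τ.2.2⟩ else 0

lemma bdry_extF {A B : Finset (Finset ℕ)} (hA : IsClosedFam A) (hAB : A ⊆ B) (c : ℤ)
    (f : Chains k A (c + 1)) :
    bdry k B c (extF k A B (c + 1) f) = extF k A B c (bdry k A c f) := by
  have hS : A.sup id ⊆ A.sup id ∪ B.sup id := Finset.subset_union_left
  have hS' : B.sup id ⊆ A.sup id ∪ B.sup id := Finset.subset_union_right
  funext τ
  by_cases hτ : τ.1 ∈ A
  · rw [bdry_apply _ τ hS', extF, dif_pos hτ, bdry_apply _ ⟨τ.1, hτ, τ.2.2⟩ hS]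
    refine Finset.sum_congr rfl fun v hv => ?_
    rw [bterm, bterm]
    by_cases hA' : insert v τ.1 ∈ A ∧ ((insert v τ.1).card : ℤ) = c + 1
    · rw [dif_pos hA', dif_pos ⟨hAB hA'.1, hA'.2⟩, extF, dif_pos hA'.1]
    · rw [dif_neg hA']
      split_ifs with hB'
      · rw [extF, dif_neg (fun hmem => hA' ⟨hmem, hB'.2⟩), mul_zero]
      · rfl
  · rw [extF, dif_neg hτ, bdry_apply _ τ hS']
    refine Finset.sum_eq_zero fun v hv => ?_
    rw [bterm]
    split_ifs with hB'
    · rw [extF, dif_neg (fun hmem => hτ (hA _ hmem _ (Finset.subset_insert _ _))), mul_zero]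
    · rfl

lemma bdry_resF {A B : Finset (Finset ℕ)} (hA : IsClosedFam A) (c : ℤ)
    (f : Chains k B (c + 1)) (τ : {σ : Finset ℕ // σ ∈ B \ A ∧ (σ.card : ℤ) = c}) :
    bdry k (B \ A) c (resF k A B (c + 1) f) τ =
      bdry k B c f ⟨τ.1, (Finset.mem_sdiff.mp τ.2.1).1, τ.2.2⟩ := by
  have hτA : τ.1 ∉ A := (Finset.mem_sdiff.mp τ.2.1).2
  have hS : (B \ A).sup id ⊆ (B \ A).sup id ∪ B.sup id := Finset.subset_union_left
  have hS' : B.sup id ⊆ (B \ A).sup id ∪ B.sup id := Finset.subset_union_right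
  rw [bdry_apply _ τ hS, bdry_apply _ _ hS']
  refine Finset.sum_congr rfl fun v hv => ?_
  rw [bterm, bterm]
  by_cases hB' : insert v τ.1 ∈ B ∧ ((insert v τ.1).card : ℤ) = c + 1
  · have hnA : insert v τ.1 ∉ A := fun h => hτA (hA _ h _ (Finset.subset_insert _ _))
    rw [dif_pos hB', dif_pos ⟨Finset.mem_sdiff.mpr ⟨hB'.1, hnA⟩, hB'.2⟩]
    rfl
  · rw [dif_neg hB',
      dif_neg (fun h => hB' ⟨(Finset.mem_sdiff.mp h.1).1, h.2⟩)]

lemma bdry_extQF {A B : Finset (Finset ℕ)} (hA : IsClosedFam A) (c : ℤ)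
    (y : Chains k (B \ A) (c + 1)) (τ : {σ : Finset ℕ // σ ∈ B ∧ (σ.card : ℤ) = c})
    (hτ : τ.1 ∉ A) :
    bdry k B c (extQF k A B (c + 1) y) τ =
      bdry k (B \ A) c y ⟨τ.1, Finset.mem_sdiff.mpr ⟨τ.2.1, hτ⟩, τ.2.2⟩ := by
  have hS : (B \ A).sup id ⊆ (B \ A).sup id ∪ B.sup id := Finset.subset_union_left
  have hS' : B.sup id ⊆ (B \ A).sup id ∪ B.sup id := Finset.subset_union_right
  rw [bdry_apply _ τ hS', bdry_apply _ _ hS]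
  refine Finset.sum_congr rfl fun v hv => ?_
  rw [bterm, bterm]
  by_cases hB' : insert v τ.1 ∈ B ∧ ((insert v τ.1).card : ℤ) = c + 1
  · have hnA : insert v τ.1 ∉ A := fun h => hτ (hA _ h _ (Finset.subset_insert _ _))
    have hQ' : insert v τ.1 ∈ B \ A := Finset.mem_sdiff.mpr ⟨hB'.1, hnA⟩
    rw [dif_pos hB', dif_pos ⟨hQ', hB'.2⟩, extQF, dif_pos hQ']
  · rw [dif_neg hB',
      dif_neg (fun h => hB' ⟨(Finset.mem_sdiff.mp h.1).1, h.2⟩)]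

lemma subsingleton_redH_iff {Q : Finset (Finset ℕ)} {n : ℤ} :
    Subsingleton (redH k Q n) ↔
      ∀ f : Chains k Q (n + 1), bdry k Q n f = 0 →
        f ∈ LinearMap.range (bdry k Q (n + 1)) := by
  rw [Submodule.Quotient.subsingleton_iff, Submodule.eq_top_iff']
  constructor
  · intro h f hf
    have := h ⟨f, LinearMap.mem_ker.mpr hf⟩
    simpa [Submodule.mem_comap] using this
  · intro h x
    simpa [Submodule.mem_comap] using h x.1 (LinearMap.mem_ker.mp x.2)

lemma key_chase {A B : Finset (Finset ℕ)} (hA : IsClosedFam A) (hB : IsClosedFam B)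
    (hAB : A ⊆ B) (i : ℤ) (hBi : Subsingleton (redH k B i))
    (hAi : ¬ Subsingleton (redH k A i)) :
    ¬ Subsingleton (redH k (B \ A) (i + 1)) := by
  rw [subsingleton_redH_iff] at hBi ⊢
  rw [subsingleton_redH_iff] at hAi
  push_neg at hAi
  obtain ⟨w, hw0, hwnb⟩ := hAi
  intro hQ
  have hW0 : bdry k B i (extF k A B (i + 1) w) = 0 := by
    rw [bdry_extF hA hAB, hw0]
    funext τ
    rw [extF]
    split_ifs <;> rfl
  obtain ⟨u, hu⟩ := hBi _ hW0
  set z := resF k A B (i + 1 + 1) u with hz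
  have hz0 : bdry k (B \ A) (i + 1) z = 0 := by
    funext τ
    rw [hz, bdry_resF hA, hu, extF, dif_neg (Finset.mem_sdiff.mp τ.2.1).2]
    rfl
  obtain ⟨y, hy⟩ := hQ z hz0
  set Y := extQF k A B (i + 1 + 1 + 1) y with hY
  set V := bdry k B (i + 1 + 1) Y with hV
  have hsupp : ∀ τ : {σ : Finset ℕ // σ ∈ B ∧ (σ.card : ℤ) = i + 1 + 1},
      τ.1 ∉ A → u τ - V τ = 0 := by
    intro τ hτ
    have h1 : V τ = z ⟨τ.1, Finset.mem_sdiff.mpr ⟨τ.2.1, hτ⟩, τ.2.2⟩ := by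
      rw [hV, hY, bdry_extQF hA _ _ τ hτ, hy]
    have h2 : z ⟨τ.1, Finset.mem_sdiff.mpr ⟨τ.2.1, hτ⟩, τ.2.2⟩ = u τ := rfl
    rw [h1, h2, sub_self]
  set t : Chains k A (i + 1 + 1) := fun τ => (u - V) ⟨τ.1, hAB τ.2.1, τ.2.2⟩ with ht
  have hext : extF k A B (i + 1 + 1) t = u - V := by
    funext τ
    rw [extF]
    split_ifs with h
    · rfl
    · exact (hsupp τ h).symm
  have hbV : bdry k B (i + 1) V = 0 := by
    rw [hV]
    exact bdry_bdry hB (i + 1) Y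
  have h3 : bdry k B (i + 1) (u - V) = extF k A B (i + 1) w := by
    rw [map_sub, hu, hbV, sub_zero]
  have h4 : extF k A B (i + 1) (bdry k A (i + 1) t) = extF k A B (i + 1) w := by
    rw [← bdry_extF hA hAB, hext, h3]
  have h5 : bdry k A (i + 1) t = w := by
    funext τ
    have h6 := congrFun h4 ⟨τ.1, hAB τ.2.1, τ.2.2⟩
    rw [extF, extF, dif_pos τ.2.1, dif_pos τ.2.1] at h6
    exact h6
  exact hwnb ⟨t, h5⟩

lemma lkF_closed {Δ : Finset (Finset ℕ)} (hΔ : IsComplex Δ) (σ : Finset ℕ) :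
    IsClosedFam (lkF Δ σ) := by
  intro τ hτ τ' hτ'
  rw [lkF, Finset.mem_filter] at hτ ⊢
  obtain ⟨h1, h2, h3⟩ := hτ
  refine ⟨hΔ τ h1 τ' hτ', hΔ _ h2 _ (Finset.union_subset_union_right hτ'), ?_⟩
  exact Finset.subset_empty.mp (h3 ▸ Finset.inter_subset_inter le_rfl hτ')

lemma lkF_mono {Δ Γ : Finset (Finset ℕ)} (hΔΓ : Δ ⊆ Γ) (σ : Finset ℕ) :
    lkF Δ σ ⊆ lkF Γ σ := by
  intro τ hτ
  rw [lkF, Finset.mem_filter] at hτ ⊢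
  exact ⟨hΔΓ hτ.1, hΔΓ hτ.2.1, hτ.2.2⟩

end Chase
/-- If `Δ` is a `d`-dimensional complex with `depth k[Δ] < dim k[Δ] - 1 = d`, then `Δ` has
no Cohen–Macaulay extender: for every `d`-dimensional Cohen–Macaulay complex `Γ ⊇ Δ`,
the relative complex `(Γ,Δ)` is not relative Cohen–Macaulay.  Equivalently, if there are
a face `σ ∈ Δ` and an index `i` with `H̃_i(lk_Δ(σ); k) ≠ 0` and `|σ| + i + 1 ≤ d - 1`,
then for any `d`-dimensional Cohen–Macaulay `Γ ⊇ Δ` the relative homology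
`H̃_{i+1}(lk_Γ(σ), lk_Δ(σ); k)` is nonzero with `|σ| + (i+1) < d`. -/
theorem no_CM_extender_of_small_depth (k : Type) [Field k] (d : ℤ)
    (Δ : Finset (Finset ℕ)) (hΔ : IsComplex Δ) (hdim : dimIs Δ d) :
    (¬ DepthGE k Δ d →
      ∀ Γ : Finset (Finset ℕ), IsComplex Γ → dimIs Γ d → IsCM k Γ d → Δ ⊆ Γ →
        ¬ RelCM k Γ Δ d) ∧
    (∀ σ ∈ Δ, ∀ i : ℤ,
      ¬ Subsingleton (redH k (lkF Δ σ) i) → (σ.card : ℤ) + i + 1 ≤ d - 1 →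
      ∀ Γ : Finset (Finset ℕ), IsComplex Γ → dimIs Γ d → IsCM k Γ d → Δ ⊆ Γ →
        ¬ Subsingleton (redH k (lkF Γ σ \ lkF Δ σ) (i + 1)) ∧
          (σ.card : ℤ) + (i + 1) < d) := by
  have main : ∀ σ ∈ Δ, ∀ i : ℤ,
      ¬ Subsingleton (redH k (lkF Δ σ) i) → (σ.card : ℤ) + i + 1 ≤ d - 1 →
      ∀ Γ : Finset (Finset ℕ), IsComplex Γ → dimIs Γ d → IsCM k Γ d → Δ ⊆ Γ →
        ¬ Subsingleton (redH k (lkF Γ σ \ lkF Δ σ) (i + 1)) ∧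
          (σ.card : ℤ) + (i + 1) < d := by
    intro σ hσ i hne hle Γ hΓ _ hCM hΔΓ
    have hσΓ : σ ∈ Γ := hΔΓ hσ
    refine ⟨key_chase (lkF_closed hΔ σ) (lkF_closed hΓ σ) (lkF_mono hΔΓ σ) i
      (hCM σ hσΓ i (by omega)) hne, by omega⟩
  refine ⟨?_, main⟩
  intro hdep Γ hΓ hΓd hCM hΔΓ hrel
  rw [DepthGE] at hdep
  push_neg at hdep
  obtain ⟨σ, hσ, i, hlt, hne⟩ := hdep
  have h := main σ hσ i (not_subsingleton_iff_nontrivial.mpr hne) (by omega) Γ hΓ hΓd hCM hΔΓ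
  exact h.1 (hrel σ (hΔΓ hσ) (i + 1) (by omega))
end

section
/- Fix an integer d ≥ 1 and define g : {0,1,…,d+1} → ℤ by the recurrence g(0) = 0 and g(k) = k(2^{d+1} − 2^k) + Σ_{j=0}^{k−1} C(k,j) g(j) for k ≥ 1. Then g(k) ≤ 2^{2^k − 1 + d} for all 0 ≤ k ≤ d+1. -/
lemma pe_aux (n : ℕ) : 2 * n + 8 ≤ 2 ^ (n + 3) := by
  induction n with
  | zero => norm_num
  | succ m ih =>
    have h2 : (2:ℕ) ≤ 2 ^ (m + 3) := by
      calc (2:ℕ) = 2 ^ 1 := rfl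
      _ ≤ 2 ^ (m + 3) := Nat.pow_le_pow_right (by norm_num) (by omega)
    have h3 : 2 ^ (m + 1 + 3) = 2 * 2 ^ (m + 3) := by ring
    omega

lemma pe_choose_le (k j : ℕ) : Nat.choose k j ≤ 2 ^ k := by
  rcases le_or_gt j k with h | h
  · calc Nat.choose k j
        ≤ ∑ i ∈ Finset.range (k + 1), Nat.choose k i :=
          Finset.single_le_sum (fun _ _ => Nat.zero_le _)
            (Finset.mem_range.mpr (by omega))
    _ = 2 ^ k := Nat.sum_range_choose k
  · simp [Nat.choose_eq_zero_of_lt h]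

lemma pe_key' (k : ℕ) (hk : 1 ≤ k) :
    2 * k + ∑ i ∈ Finset.range (k - 1), Nat.choose k (i + 1) * 2 ^ (2 ^ (i + 1) - 1)
      ≤ 2 ^ (2 ^ k - 1) := by
  match k, hk with
  | 1, _ => decide
  | 2, _ => decide
  | 3, _ => decide
  | (n + 4), _ =>
    have haux : 2 * n + 8 ≤ 2 ^ (n + 3) := pe_aux n
    have haux1 : 2 * (n + 1) + 8 ≤ 2 ^ (n + 4) := pe_aux (n + 1)
    have hE2 : 2 ^ (n + 4) = 2 * 2 ^ (n + 3) := by ring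
    have hE3 : 2 ^ (n + 3) = 2 * 2 ^ (n + 2) := by ring
    -- bound each summand
    have hb : ∀ i ∈ Finset.range (n + 3),
        Nat.choose (n + 4) (i + 1) * 2 ^ (2 ^ (i + 1) - 1)
          ≤ 2 ^ (n + 4) * 2 ^ (2 ^ (n + 3) - 1) := by
      intro i hi
      apply Nat.mul_le_mul (pe_choose_le _ _)
      apply Nat.pow_le_pow_right (by norm_num)
      have : 2 ^ (i + 1) ≤ 2 ^ (n + 3) :=
        Nat.pow_le_pow_right (by norm_num) (by simp at hi; omega)
      omega
    have hsum : ∑ i ∈ Finset.range (n + 3),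
        Nat.choose (n + 4) (i + 1) * 2 ^ (2 ^ (i + 1) - 1)
          ≤ (n + 3) * (2 ^ (n + 4) * 2 ^ (2 ^ (n + 3) - 1)) := by
      calc ∑ i ∈ Finset.range (n + 3),
            Nat.choose (n + 4) (i + 1) * 2 ^ (2 ^ (i + 1) - 1)
          ≤ ∑ _i ∈ Finset.range (n + 3), 2 ^ (n + 4) * 2 ^ (2 ^ (n + 3) - 1) :=
            Finset.sum_le_sum hb
        _ = (n + 3) * (2 ^ (n + 4) * 2 ^ (2 ^ (n + 3) - 1)) := by
            rw [Finset.sum_const, Finset.card_range, smul_eq_mul]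
    have hn3 : n + 3 ≤ 2 ^ (n + 2) := by omega
    have hstep : (n + 3) * (2 ^ (n + 4) * 2 ^ (2 ^ (n + 3) - 1))
        ≤ 2 ^ (2 ^ (n + 4) - 2) := by
      calc (n + 3) * (2 ^ (n + 4) * 2 ^ (2 ^ (n + 3) - 1))
          ≤ 2 ^ (n + 2) * (2 ^ (n + 4) * 2 ^ (2 ^ (n + 3) - 1)) :=
            Nat.mul_le_mul_right _ hn3
        _ = 2 ^ ((n + 2) + (n + 4) + (2 ^ (n + 3) - 1)) := by
            rw [← mul_assoc, ← pow_add, ← pow_add]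
        _ ≤ 2 ^ (2 ^ (n + 4) - 2) :=
            Nat.pow_le_pow_right (by norm_num) (by omega)
    have hfirst : 2 * (n + 4) ≤ 2 ^ (2 ^ (n + 4) - 2) := by
      calc 2 * (n + 4) = 2 * (n + 1) + 6 := by ring
        _ ≤ 2 ^ (n + 4) := by omega
        _ ≤ 2 ^ (2 ^ (n + 4) - 2) :=
            Nat.pow_le_pow_right (by norm_num) (by omega)
    have hfin : 2 ^ (2 ^ (n + 4) - 2) + 2 ^ (2 ^ (n + 4) - 2) = 2 ^ (2 ^ (n + 4) - 1) := by
      have h4 : 4 ≤ 2 ^ (n + 4) := by omega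
      have : 2 ^ (n + 4) - 1 = (2 ^ (n + 4) - 2) + 1 := by omega
      rw [this, pow_succ]
      ring
    have h1 : (n + 4) - 1 = n + 3 := by omega
    rw [h1]
    omega

lemma pe_key (d k : ℕ) (hk : 1 ≤ k) :
    k * 2 ^ (d + 1) +
        ∑ i ∈ Finset.range (k - 1), Nat.choose k (i + 1) * 2 ^ (2 ^ (i + 1) - 1 + d)
      ≤ 2 ^ (2 ^ k - 1 + d) := by
  have h := pe_key' k hk
  calc k * 2 ^ (d + 1) +
        ∑ i ∈ Finset.range (k - 1), Nat.choose k (i + 1) * 2 ^ (2 ^ (i + 1) - 1 + d)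
      = (2 * k + ∑ i ∈ Finset.range (k - 1),
          Nat.choose k (i + 1) * 2 ^ (2 ^ (i + 1) - 1)) * 2 ^ d := by
        rw [add_mul, Finset.sum_mul]
        congr 1
        · rw [pow_succ]; ring
        · exact Finset.sum_congr rfl fun i _ => by rw [pow_add]; ring
    _ ≤ 2 ^ (2 ^ k - 1) * 2 ^ d := Nat.mul_le_mul_right _ h
    _ = 2 ^ (2 ^ k - 1 + d) := (pow_add 2 _ d).symm

/-- Fix `d ≥ 1` and let `g` satisfy `g 0 = 0` and, for `1 ≤ k ≤ d + 1`,
`g k = k (2^{d+1} - 2^k) + ∑_{j=0}^{k-1} C(k,j) g j` (the recurrence counting the faces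
of the recursively constructed `(d, d-k)`-partition extender).  Then
`g k ≤ 2^{2^k - 1 + d}` for all `0 ≤ k ≤ d + 1`. -/
theorem partition_extender_size_bound (d : ℕ) (hd : 1 ≤ d) (g : ℕ → ℤ)
    (hg0 : g 0 = 0)
    (hgrec : ∀ k : ℕ, 1 ≤ k → k ≤ d + 1 →
      g k = (k : ℤ) * (2 ^ (d + 1) - 2 ^ k) +
        ∑ j ∈ Finset.range k, (Nat.choose k j : ℤ) * g j) :
    ∀ k : ℕ, k ≤ d + 1 → g k ≤ 2 ^ (2 ^ k - 1 + d) := by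
  intro k
  induction k using Nat.strong_induction_on with
  | _ k ih =>
    intro hk
    rcases Nat.eq_zero_or_pos k with rfl | hk1
    · rw [hg0]; positivity
    · obtain ⟨m, rfl⟩ : ∃ m, k = m + 1 := ⟨k - 1, by omega⟩
      rw [hgrec (m + 1) (by omega) hk, Finset.sum_range_succ']
      have hz : (Nat.choose (m + 1) 0 : ℤ) * g 0 = 0 := by rw [hg0, mul_zero]
      rw [hz, add_zero]
      have hsum : ∑ i ∈ Finset.range m, (Nat.choose (m + 1) (i + 1) : ℤ) * g (i + 1)
          ≤ ∑ i ∈ Finset.range m, (Nat.choose (m + 1) (i + 1) : ℤ) * 2 ^ (2 ^ (i + 1) - 1 + d) := by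
        apply Finset.sum_le_sum
        intro i hi
        have hi' := Finset.mem_range.mp hi
        exact mul_le_mul_of_nonneg_left
          (ih (i + 1) (by omega) (by omega)) (by positivity)
      have hfirst : ((m + 1 : ℕ) : ℤ) * (2 ^ (d + 1) - 2 ^ (m + 1))
          ≤ ((m + 1 : ℕ) : ℤ) * 2 ^ (d + 1) := by
        apply mul_le_mul_of_nonneg_left _ (by positivity)
        have : (0:ℤ) ≤ 2 ^ (m + 1) := by positivity
        linarith
      have hkey := pe_key d (m + 1) (by omega)
      have hkey' : ((m + 1 : ℕ) : ℤ) * 2 ^ (d + 1) +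
          ∑ i ∈ Finset.range m, (Nat.choose (m + 1) (i + 1) : ℤ) * 2 ^ (2 ^ (i + 1) - 1 + d)
            ≤ 2 ^ (2 ^ (m + 1) - 1 + d) := by
        have := Int.ofNat_le.mpr hkey
        push_cast at this
        simpa using this
      linarith
end
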